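/- Let f : [0,∞) × ℝ^d → ℝ be convex, let (t,x) ∈ (0,∞) × ℝ^d, and let φ be a differentiable function such that f − φ has a local maximum at (t,x). Then f is differentiable at (t,x), the subdifferential ∂f(t,x) equals the singleton {(∂_t φ(t,x), ∇φ(t,x))}, and the derivatives of f at (t,x) coincide with those of φ. -/

import Mathlib

open Set

set_option maxHeartbeats 2000000 in
theorem stmt_5 (d : ℕ) (f φ : ℝ × EuclideanSpace ℝ (Fin d) → ℝ)
    (hf : ConvexOn ℝ {z : ℝ × EuclideanSpace ℝ (Fin d) | 0 ≤ z.1} f)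
    (hφ : Differentiable ℝ φ)
    (t : ℝ) (ht : 0 < t) (x : EuclideanSpace ℝ (Fin d))
    (hmax : ∀ᶠ z in nhds (t, x), f z - φ z ≤ f (t, x) - φ (t, x)) :
    HasFDerivAt f (fderiv ℝ φ (t, x)) (t, x) ∧
      ∀ (a : ℝ) (p : EuclideanSpace ℝ (Fin d)),
        (∀ (t' : ℝ) (x' : EuclideanSpace ℝ (Fin d)), 0 ≤ t' →
            f (t, x) + a * (t' - t) + (inner ℝ p (x' - x) : ℝ) ≤ f (t', x')) ↔
          ∀ (v : ℝ × EuclideanSpace ℝ (Fin d)),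
            a * v.1 + (inner ℝ p v.2 : ℝ) = fderiv ℝ φ (t, x) v := by
  classical
  set z0 : ℝ × EuclideanSpace ℝ (Fin d) := (t, x) with hz0def
  set L : (ℝ × EuclideanSpace ℝ (Fin d)) →L[ℝ] ℝ := fderiv ℝ φ z0 with hLdef
  have hz01 : z0.1 = t := rfl
  have hL : HasFDerivAt φ L z0 := (hφ z0).hasFDerivAt
  have he : (fun h => φ (z0 + h) - φ z0 - L h)
      =o[nhds 0] (fun h : ℝ × EuclideanSpace ℝ (Fin d) => h) :=
    hasFDerivAt_iff_isLittleO_nhds_zero.mp hL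
  set e : ℝ × EuclideanSpace ℝ (Fin d) → ℝ := fun h => φ (z0 + h) - φ z0 - L h with hedef
  have tadd : Filter.Tendsto (fun h : ℝ × EuclideanSpace ℝ (Fin d) => z0 + h)
      (nhds 0) (nhds z0) := by
    simpa using (tendsto_const_nhds.add Filter.tendsto_id :
      Filter.Tendsto (fun h : ℝ × EuclideanSpace ℝ (Fin d) => z0 + h) (nhds 0) (nhds (z0 + 0)))
  have ev1 : ∀ᶠ h : ℝ × EuclideanSpace ℝ (Fin d) in nhds 0,
      f (z0 + h) - φ (z0 + h) ≤ f z0 - φ z0 := tadd.eventually hmax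
  have negtend : Filter.Tendsto (fun h : ℝ × EuclideanSpace ℝ (Fin d) => -h)
      (nhds 0) (nhds 0) := by
    simpa using (continuous_neg.tendsto (0 : ℝ × EuclideanSpace ℝ (Fin d)))
  have ev2 : ∀ᶠ h : ℝ × EuclideanSpace ℝ (Fin d) in nhds 0,
      f (z0 + -h) - φ (z0 + -h) ≤ f z0 - φ z0 := negtend.eventually ev1
  have ev3 : ∀ᶠ h : ℝ × EuclideanSpace ℝ (Fin d) in nhds 0, |h.1| < t := by
    have h1 : Filter.Tendsto (fun h : ℝ × EuclideanSpace ℝ (Fin d) => |h.1|)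
        (nhds 0) (nhds 0) := by
      simpa using (continuous_fst.abs.tendsto (0 : ℝ × EuclideanSpace ℝ (Fin d)))
    exact h1.eventually_lt_const ht
  have hz0S : z0 ∈ {z : ℝ × EuclideanSpace ℝ (Fin d) | 0 ≤ z.1} := le_of_lt ht
  have bound : ∀ᶠ h : ℝ × EuclideanSpace ℝ (Fin d) in nhds 0,
      ‖f (z0 + h) - f z0 - L h‖ ≤ ‖e h‖ + ‖e (-h)‖ := by
    filter_upwards [ev1, ev2, ev3] with h h1 h2 h3
    obtain ⟨h3a, h3b⟩ := abs_lt.mp h3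
    have hm1 : z0 + h ∈ {z : ℝ × EuclideanSpace ℝ (Fin d) | 0 ≤ z.1} := by
      simp only [Set.mem_setOf_eq, Prod.fst_add, hz01]; linarith
    have hm2 : z0 + -h ∈ {z : ℝ × EuclideanSpace ℝ (Fin d) | 0 ≤ z.1} := by
      simp only [Set.mem_setOf_eq, Prod.fst_add, Prod.fst_neg, hz01]; linarith
    have hconv := hf.2 hm1 hm2 (by norm_num : (0:ℝ) ≤ 1/2) (by norm_num : (0:ℝ) ≤ 1/2)
      (by norm_num)
    have hpt : (1/2 : ℝ) • (z0 + h) + (1/2 : ℝ) • (z0 + -h) = z0 := by module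
    rw [hpt] at hconv
    simp only [smul_eq_mul] at hconv
    have heh : φ (z0 + h) - φ z0 - L h = e h := rfl
    have henh : φ (z0 + -h) - φ z0 - L (-h) = e (-h) := rfl
    have hLneg : L (-h) = -(L h) := by simp
    have upper : f (z0 + h) - f z0 - L h ≤ e h := by rw [← heh]; linarith
    have lower : -(e (-h)) ≤ f (z0 + h) - f z0 - L h := by
      rw [← henh, hLneg]; linarith
    rw [Real.norm_eq_abs, abs_le]
    have hb1 := le_abs_self (e h)
    have hb2 := le_abs_self (e (-h))
    have hn1 : |e h| = ‖e h‖ := (Real.norm_eq_abs _).symm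
    have hn2 : |e (-h)| = ‖e (-h)‖ := (Real.norm_eq_abs _).symm
    rw [hn1] at hb1
    rw [hn2] at hb2
    have hg1 : (0:ℝ) ≤ ‖e h‖ := norm_nonneg _
    have hg2 : (0:ℝ) ≤ ‖e (-h)‖ := norm_nonneg _
    constructor <;> linarith
  have little : (fun h : ℝ × EuclideanSpace ℝ (Fin d) => ‖e h‖ + ‖e (-h)‖)
      =o[nhds 0] (fun h : ℝ × EuclideanSpace ℝ (Fin d) => h) := by
    have h1 : (fun h : ℝ × EuclideanSpace ℝ (Fin d) => e (-h))
        =o[nhds 0] (fun h : ℝ × EuclideanSpace ℝ (Fin d) => -h) := he.comp_tendsto negtend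
    have h2 : (fun h : ℝ × EuclideanSpace ℝ (Fin d) => -h)
        =O[nhds (0 : ℝ × EuclideanSpace ℝ (Fin d))]
        (fun h : ℝ × EuclideanSpace ℝ (Fin d) => h) :=
      (Asymptotics.isBigO_refl (fun h : ℝ × EuclideanSpace ℝ (Fin d) => h) _).neg_left
    exact he.norm_left.add ((h1.trans_isBigO h2).norm_left)
  have big : (fun h : ℝ × EuclideanSpace ℝ (Fin d) => f (z0 + h) - f z0 - L h) =O[nhds 0]
      (fun h : ℝ × EuclideanSpace ℝ (Fin d) => ‖e h‖ + ‖e (-h)‖) := by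
    refine Asymptotics.IsBigO.of_bound 1 ?_
    filter_upwards [bound] with h hb
    have : ‖(‖e h‖ + ‖e (-h)‖)‖ = ‖e h‖ + ‖e (-h)‖ := Real.norm_of_nonneg (by positivity)
    rw [one_mul, this]; exact hb
  have hfd : HasFDerivAt f L z0 :=
    hasFDerivAt_iff_isLittleO_nhds_zero.mpr (big.trans_isLittleO little)
  have tends : ∀ w : ℝ × EuclideanSpace ℝ (Fin d),
      Filter.Tendsto (fun s : ℝ => (f (z0 + s • w) - f z0) / s)
      (nhdsWithin 0 (Set.Ioi 0)) (nhds (L w)) := by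
    intro w
    have h1 : HasLineDerivAt ℝ f (L w) z0 w := hfd.hasLineDerivAt w
    have h2 : Filter.Tendsto (slope (fun s : ℝ => f (z0 + s • w)) 0)
        (nhdsWithin 0 {(0:ℝ)}ᶜ) (nhds (L w)) := hasDerivAt_iff_tendsto_slope.mp h1
    have h3 := h2.mono_left (nhdsWithin_mono _ (fun s hs => ne_of_gt hs))
    refine h3.congr fun s => ?_
    simp [slope, div_eq_inv_mul]
  have claimA : ∀ z : ℝ × EuclideanSpace ℝ (Fin d), 0 ≤ z.1 → f z0 + L (z - z0) ≤ f z := by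
    intro z hz
    have hle : L (z - z0) ≤ f z - f z0 := by
      refine le_of_tendsto (tends (z - z0)) ?_
      filter_upwards [Ioc_mem_nhdsGT_of_mem (by constructor <;> norm_num :
        (0:ℝ) ∈ Set.Ico 0 1)] with s hs
      obtain ⟨hs0, hs1⟩ := hs
      have hconv := hf.2 hz0S hz (by linarith : (0:ℝ) ≤ 1 - s) hs0.le (by ring)
      have hpt : (1 - s) • z0 + s • z = z0 + s • (z - z0) := by module
      rw [hpt] at hconv
      simp only [smul_eq_mul] at hconv
      rw [div_le_iff₀ hs0]
      nlinarith
    linarith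
  refine ⟨hfd, fun a p => ⟨fun hsub => ?_, fun heq t' x' ht' => ?_⟩⟩
  · have key : ∀ w : ℝ × EuclideanSpace ℝ (Fin d),
        a * w.1 + (inner ℝ p w.2 : ℝ) ≤ L w := by
      intro w
      refine ge_of_tendsto (tends w) ?_
      have hpos : ∀ᶠ s : ℝ in nhdsWithin 0 (Set.Ioi 0), 0 ≤ t + s * w.1 := by
        have h1 : Filter.Tendsto (fun s : ℝ => t + s * w.1) (nhdsWithin 0 (Set.Ioi 0))
            (nhds t) := by
          have : Filter.Tendsto (fun s : ℝ => t + s * w.1) (nhds 0) (nhds (t + 0 * w.1)) :=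
            (continuous_const.add (continuous_id.mul continuous_const)).tendsto 0
          simpa using this.mono_left nhdsWithin_le_nhds
        exact (h1.eventually_const_lt ht).mono fun s hs => hs.le
      filter_upwards [hpos, self_mem_nhdsWithin] with s hs hs0
      have hs0' : (0:ℝ) < s := hs0
      have happ := hsub (t + s * w.1) (x + s • w.2) hs
      have hpair : ((t + s * w.1, x + s • w.2) : ℝ × EuclideanSpace ℝ (Fin d))
          = z0 + s • w := by
        simp [hz0def, Prod.ext_iff, Prod.smul_fst, Prod.smul_snd, smul_eq_mul]
      rw [hpair] at happ
      have hsimp1 : t + s * w.1 - t = s * w.1 := by ring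
      have hsimp2 : x + s • w.2 - x = s • w.2 := by abel
      rw [hsimp1, hsimp2, real_inner_smul_right] at happ
      rw [le_div_iff₀ hs0']
      nlinarith [happ]
    intro v
    have h1 := key v
    have h2 := key (-v)
    have h3 : a * (-v).1 + (inner ℝ p (-v).2 : ℝ) = -(a * v.1 + (inner ℝ p v.2 : ℝ)) := by
      simp [inner_neg_right]; ring
    have h4 : L (-v) = -(L v) := by simp
    rw [h3, h4] at h2
    linarith
  · have hz : (0:ℝ) ≤ ((t', x') : ℝ × EuclideanSpace ℝ (Fin d)).1 := ht'
    have h1 := claimA (t', x') hz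
    have h2 := heq ((t', x') - z0)
    have h3 : ((t', x') - z0 : ℝ × EuclideanSpace ℝ (Fin d)) = (t' - t, x' - x) := by
      simp [hz0def, Prod.ext_iff]
    rw [h3] at h1 h2
    simp only at h2
    linarith
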